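/- arXiv:2304.13065 — 2 statements merged into one kernel-verified Lean document; each statement's English description precedes it below -/
import Mathlib

section
/- If (S, ≤) is a well-quasi ordering, then the set of finite multisets over S ordered by multiset embedding (M₁ ⊑ M₂ iff there is an injection h from M₁ into M₂ with s ≤ h(s) for all s ∈ M₁) is a well-quasi ordering. -/
def IsWqo {S : Type*} (le : S → S → Prop) : Prop :=
  Reflexive le ∧ Transitive le ∧ ∀ f : ℕ → S, ∃ i j, i < j ∧ le (f i) (f j)

/-- Multiset embedding: `M₁` embeds into `M₂` iff there is a submultiset `M₂'`
of `M₂` that is matched elementwise (injectively) with `M₁` via `le`. -/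
def MultisetEmb {S : Type*} (le : S → S → Prop) (M₁ M₂ : Multiset S) : Prop :=
  ∃ M₂' : Multiset S, M₂' ≤ M₂ ∧ Multiset.Rel le M₁ M₂'

lemma rel_of_forall₂ {S T : Type*} {le : S → T → Prop} {l₁ : List S} {l₂ : List T}
    (h : List.Forall₂ le l₁ l₂) : Multiset.Rel le (l₁ : Multiset S) (l₂ : Multiset T) := by
  induction h with
  | nil => exact Multiset.Rel.zero
  | cons hab _ ih => simpa using Multiset.Rel.cons hab ih

lemma rel_of_le_of_rel {S : Type*} {le : S → S → Prop} {A B C : Multiset S}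
    (hAB : A ≤ B) (h : Multiset.Rel le B C) :
    ∃ C' : Multiset S, C' ≤ C ∧ Multiset.Rel le A C' := by
  obtain ⟨D, rfl⟩ := Multiset.le_iff_exists_add.mp hAB
  rw [Multiset.rel_add_left] at h
  obtain ⟨C₁, C₂, h₁, _, rfl⟩ := h
  exact ⟨C₁, Multiset.le_add_right _ _, h₁⟩

/-- If `(S, le)` is a wqo then finite multisets over `S` ordered by multiset
embedding form a wqo. -/
theorem multiset_emb_isWqo {S : Type*} (le : S → S → Prop) (hwqo : IsWqo le) :
    IsWqo (MultisetEmb le) := by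
  obtain ⟨hrefl, htrans, hseq⟩ := hwqo
  haveI : IsRefl S le := ⟨hrefl⟩
  haveI : IsTrans S le := ⟨fun a b c h1 h2 => htrans h1 h2⟩
  refine ⟨?_, ?_, ?_⟩
  · intro M
    exact ⟨M, le_rfl, Multiset.rel_refl_of_refl_on fun x _ => hrefl x⟩
  · rintro A B C ⟨B', hB', hAB⟩ ⟨C', hC', hBC⟩
    obtain ⟨C'', hC'', hB'C⟩ := rel_of_le_of_rel hB' hBC
    exact ⟨C'', hC''.trans hC', Multiset.Rel.trans le hAB hB'C⟩
  · intro f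
    have huniv : (Set.univ : Set S).PartiallyWellOrderedOn le := fun g => hseq (fun n => (g n).1)
    haveI : IsPreorder S le := { refl := hrefl, trans := fun a b c h1 h2 => htrans h1 h2 }
    have hH := huniv.partiallyWellOrderedOn_sublistForall₂ le
    obtain ⟨i, j, hij, hsub⟩ := Set.partiallyWellOrderedOn_iff_exists_lt.mp hH (fun n => (f n).toList) (fun n => by simp)
    refine ⟨i, j, hij, ?_⟩
    obtain ⟨l, hforall, hsl⟩ := List.sublistForall₂_iff.mp hsub
    refine ⟨(l : Multiset S), ?_, ?_⟩
    · rw [← (f j).coe_toList]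
      exact Multiset.coe_le.mpr hsl.subperm
    · rw [← (f i).coe_toList]
      exact rel_of_forall₂ hforall
end

section
/- Soundness of the saturation algorithm (Lemma 1, base case structure): let P' be P with all receive transitions removed. If a configuration s is reachable in P' from an initial configuration, then s is coverable in RBN(P). More generally, for the sequence of processes P'₀ ⊆ P'₁ ⊆ … constructed by the algorithm (P'ᵢ adds all receive transitions ??a for letters a such that some configuration enabling !!a is coverable in P'ᵢ₋₁), any configuration reachable in some P'ᵢ is coverable in RBN(P). -/
/-- A broadcast transition on a fixed graph `(V, E)`. -/
def Broadcast {S A V : Type*} (Rb Rr : S → A → S → Prop)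
    (E : V → V → Prop) (L L' : V → S) (a : A) : Prop :=
  ∃ v, Rb (L v) a (L' v) ∧
    (∀ u, E v u → Rr (L u) a (L' u)) ∧
    (∀ w, w ≠ v → ¬ E v w → L' w = L w)

/-- One step of a reconfigurable broadcast network. -/
def RBNStep {S A V : Type*} (Rb Rr : S → A → S → Prop)
    (c c' : (V → V → Prop) × (V → S)) : Prop :=
  (c'.1 = c.1 ∧ ∃ a, Broadcast Rb Rr c.1 c.2 c'.2 a) ∨
  (c'.2 = c.2 ∧ (∀ v, ¬ c'.1 v v) ∧ (∀ u v, c'.1 u v → c'.1 v u))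

/-- Coverability of `s` in the reconfigurable broadcast network `RBN(P)`. -/
def RBNCoverable {S A : Type*} (Rb Rr : S → A → S → Prop) (S₀ : Set S)
    (le : S → S → Prop) (s : S) : Prop :=
  ∃ (n : ℕ) (E₀ : Fin n → Fin n → Prop) (L₀ : Fin n → S)
    (E : Fin n → Fin n → Prop) (L : Fin n → S),
    (∀ v, ¬ E₀ v v) ∧ (∀ u v, E₀ u v → E₀ v u) ∧
    (∀ v, L₀ v ∈ S₀) ∧
    Relation.ReflTransGen (RBNStep Rb Rr) (E₀, L₀) (E, L) ∧
    ∃ v, le s (L v)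

/-- One step of the process `P'` in which all broadcast transitions are kept
and only the receive transitions with letters in `T` are kept. -/
def stepT {S A : Type*} (Rb Rr : S → A → S → Prop) (T : Set A)
    (s s' : S) : Prop :=
  (∃ a, Rb s a s') ∨ (∃ a ∈ T, Rr s a s')

/-- Reachability from an initial configuration in the process `P'` with
receive letters restricted to `T`. -/
def ReachT {S A : Type*} (Rb Rr : S → A → S → Prop) (S₀ : Set S)
    (T : Set A) (s : S) : Prop :=
  ∃ s₀ ∈ S₀, Relation.ReflTransGen (stepT Rb Rr T) s₀ s

/-- Coverability in the process `P'` with receive letters restricted to `T`. -/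
def CovT {S A : Type*} (Rb Rr : S → A → S → Prop) (S₀ : Set S)
    (le : S → S → Prop) (T : Set A) (s : S) : Prop :=
  ∃ s', le s s' ∧ ReachT Rb Rr S₀ T s'

/-- The saturation sequence of the algorithm: `P'₀` has no receive
transitions; `P'ᵢ₊₁` additionally allows receiving every letter `a` such that
some configuration enabling a `!!a`-broadcast is coverable in `P'ᵢ`. -/
def Tseq {S A : Type*} (Rb Rr : S → A → S → Prop) (S₀ : Set S)
    (le : S → S → Prop) : ℕ → Set A
  | 0 => ∅
  | i + 1 => Tseq Rb Rr S₀ le i ∪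
      {a | ∃ c c', Rb c a c' ∧ CovT Rb Rr S₀ le (Tseq Rb Rr S₀ le i) c}

/-- The saturated (fixed-point) set of receive letters. -/
def Tw {S A : Type*} (Rb Rr : S → A → S → Prop) (S₀ : Set S)
    (le : S → S → Prop) : Set A :=
  ⋃ i, Tseq Rb Rr S₀ le i


-- auxiliary: sum of edge relations
def Esum {V W : Type*} (E : V → V → Prop) (F : W → W → Prop) :
    V ⊕ W → V ⊕ W → Prop
  | Sum.inl a, Sum.inl b => E a b
  | Sum.inr a, Sum.inr b => F a b
  | _, _ => False

lemma step_liftLeft {S A V W : Type*} {Rb Rr : S → A → S → Prop}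
    {F : W → W → Prop} {M : W → S}
    (hFi : ∀ w, ¬ F w w) (hFs : ∀ u v, F u v → F v u)
    {c c' : (V → V → Prop) × (V → S)} (h : RBNStep Rb Rr c c') :
    RBNStep Rb Rr (Esum c.1 F, Sum.elim c.2 M) (Esum c'.1 F, Sum.elim c'.2 M) := by
  rcases h with ⟨hE, a, v, hb, hrecv, hrest⟩ | ⟨hL, hirr, hsym⟩
  · left
    refine ⟨by rw [hE], a, Sum.inl v, hb, ?_, ?_⟩
    · rintro (u | u) hu
      · exact hrecv u hu
      · exact hu.elim
    · rintro (w | w) hw hnw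
      · exact hrest w (by simpa using hw) hnw
      · rfl
  · right
    refine ⟨by rw [hL], ?_, ?_⟩
    · rintro (z | z) hz
      · exact hirr z hz
      · exact hFi z hz
    · rintro (x | x) (y | y) hxy
      · exact hsym x y hxy
      · exact hxy.elim
      · exact hxy.elim
      · exact hFs x y hxy

lemma step_liftRight {S A V W : Type*} {Rb Rr : S → A → S → Prop}
    {E : V → V → Prop} {L : V → S}
    (hEi : ∀ w, ¬ E w w) (hEs : ∀ u v, E u v → E v u)
    {c c' : (W → W → Prop) × (W → S)} (h : RBNStep Rb Rr c c') :
    RBNStep Rb Rr (Esum E c.1, Sum.elim L c.2) (Esum E c'.1, Sum.elim L c'.2) := by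
  rcases h with ⟨hE, a, v, hb, hrecv, hrest⟩ | ⟨hL, hirr, hsym⟩
  · left
    refine ⟨by rw [hE], a, Sum.inr v, hb, ?_, ?_⟩
    · rintro (u | u) hu
      · exact hu.elim
      · exact hrecv u hu
    · rintro (w | w) hw hnw
      · rfl
      · exact hrest w (by simpa using hw) hnw
  · right
    refine ⟨by rw [hL], ?_, ?_⟩
    · rintro (z | z) hz
      · exact hEi z hz
      · exact hirr z hz
    · rintro (x | x) (y | y) hxy
      · exact hEs x y hxy
      · exact hxy.elim
      · exact hxy.elim
      · exact hsym x y hxy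

lemma step_equiv {S A V W : Type*} {Rb Rr : S → A → S → Prop} (e : V ≃ W)
    {c c' : (V → V → Prop) × (V → S)} (h : RBNStep Rb Rr c c') :
    RBNStep Rb Rr
      ((fun u v => c.1 (e.symm u) (e.symm v)), (fun x => c.2 (e.symm x)))
      ((fun u v => c'.1 (e.symm u) (e.symm v)), (fun x => c'.2 (e.symm x))) := by
  rcases h with ⟨hE, a, v, hb, hrecv, hrest⟩ | ⟨hL, hirr, hsym⟩
  · left
    refine ⟨by rw [hE], a, e v, by simpa using hb, ?_, ?_⟩
    · intro u hu
      exact hrecv (e.symm u) (by simpa using hu)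
    · intro w hw hnw
      have hne : e.symm w ≠ v := fun h' => hw (by rw [← h', e.apply_symm_apply])
      exact hrest (e.symm w) hne (by simpa using hnw)
  · right
    exact ⟨by rw [hL], fun v h => hirr _ h, fun u v h => hsym _ _ h⟩

lemma Tseq_mem {S A : Type*} {Rb Rr : S → A → S → Prop} {S₀ : Set S}
    {le : S → S → Prop} {a : A} :
    ∀ {i : ℕ}, a ∈ Tseq Rb Rr S₀ le i →
      ∃ j < i, ∃ c c', Rb c a c' ∧ CovT Rb Rr S₀ le (Tseq Rb Rr S₀ le j) c := by
  intro i
  induction i with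
  | zero => intro h; simp [Tseq] at h
  | succ i ih =>
    intro h
    rcases h with h | h
    · obtain ⟨j, hj, hres⟩ := ih h
      exact ⟨j, Nat.lt_succ_of_lt hj, hres⟩
    · exact ⟨i, Nat.lt_succ_self i, h⟩

lemma saturation_aux {S A : Type*} (le : S → S → Prop)
    (Rb Rr : S → A → S → Prop) (S₀ : Set S)
    (hrefl : Reflexive le) (htrans : Transitive le)
    (compatB : ∀ s₁ t₁ a s₂, le s₁ t₁ → Rb s₁ a s₂ →
        ∃ t₂, le s₂ t₂ ∧ Rb t₁ a t₂)
    (compatR : ∀ s₁ t₁ a s₂, le s₁ t₁ → Rr s₁ a s₂ →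
        ∃ t₂, le s₂ t₂ ∧ Rr t₁ a t₂) :
    ∀ i, ∀ s : S, ReachT Rb Rr S₀ (Tseq Rb Rr S₀ le i) s →
      RBNCoverable Rb Rr S₀ le s := by
  intro i
  induction i using Nat.strong_induction_on with
  | _ i IH =>
  intro s hreach
  obtain ⟨s₀, hs₀, hpath⟩ := hreach
  induction hpath with
  | refl =>
    exact ⟨1, fun _ _ => False, fun _ => s₀, fun _ _ => False, fun _ => s₀,
      fun _ h => h, fun _ _ h => h, fun _ => hs₀, Relation.ReflTransGen.refl,
      0, hrefl s₀⟩
  | @tail b t hab hstep ihp =>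
    classical
    rcases hstep with ⟨a, hb⟩ | ⟨a, ha, hr⟩
    · -- broadcast step
      obtain ⟨n, E₀, L₀, E, L, hI1, hI2, hI3, hrun, v₀, hv₀⟩ := ihp
      obtain ⟨t₂, ht₂, hRb⟩ := compatB b (L v₀) a t hv₀ hb
      have step1 : RBNStep Rb Rr (E, L) ((fun _ _ => False), L) :=
        Or.inr ⟨rfl, fun _ h => h, fun _ _ h => h.elim⟩
      have step2 : RBNStep Rb Rr ((fun _ _ => False : Fin n → Fin n → Prop), L)
          ((fun _ _ => False), fun w => if w = v₀ then t₂ else L w) := by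
        refine Or.inl ⟨rfl, a, v₀, by simpa using hRb, fun u hu => hu.elim, ?_⟩
        intro w hw _
        exact if_neg hw
      exact ⟨n, E₀, L₀, fun _ _ => False, fun w => if w = v₀ then t₂ else L w,
        hI1, hI2, hI3, (hrun.tail step1).tail step2, v₀, by simpa using ht₂⟩
    · -- receive step
      obtain ⟨j, hj, p, p', hRbp, c₁, hlec₁, hr₁⟩ := Tseq_mem ha
      obtain ⟨n, E₀, L₀, E, L, hI1, hI2, hI3, hrun, v₀, hv₀⟩ := ihp
      obtain ⟨m, F₀, M₀, F, M, hJ1, hJ2, hJ3, hrun2, u₀, hu₀⟩ := IH j hj c₁ hr₁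
      obtain ⟨d, hd, hRbd⟩ := compatB p (M u₀) a p' (htrans hlec₁ hu₀) hRbp
      obtain ⟨t₂, ht₂, hRrt⟩ := compatR b (L v₀) a t hv₀ hr
      -- combined run on Fin n ⊕ Fin m
      have runA : Relation.ReflTransGen (RBNStep Rb Rr)
          (Esum E₀ F₀, Sum.elim L₀ M₀) (Esum E F₀, Sum.elim L M₀) :=
        Relation.ReflTransGen.lift
          (fun pr : (Fin n → Fin n → Prop) × (Fin n → S) =>
            (Esum pr.1 F₀, Sum.elim pr.2 M₀))
          (fun _ _ h => step_liftLeft hJ1 hJ2 h) _ _ hrun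
      have stepClear : RBNStep Rb Rr (Esum E F₀, Sum.elim L M₀)
          (Esum (fun _ _ => False) F₀, Sum.elim L M₀) := by
        refine Or.inr ⟨rfl, ?_, ?_⟩
        · rintro (z | z) hz
          · exact hz
          · exact hJ1 z hz
        · rintro (x | x) (y | y) hxy
          · exact hxy.elim
          · exact hxy.elim
          · exact hxy.elim
          · exact hJ2 x y hxy
      have runB : Relation.ReflTransGen (RBNStep Rb Rr)
          (Esum (fun _ _ => False) F₀, Sum.elim L M₀)
          (Esum (fun _ _ => False) F, Sum.elim L M) :=
        Relation.ReflTransGen.lift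
          (fun pr : (Fin m → Fin m → Prop) × (Fin m → S) =>
            (Esum (fun _ _ => False) pr.1, Sum.elim L pr.2))
          (fun _ _ h => step_liftRight (fun _ h => h) (fun _ _ h => h.elim) h) _ _ hrun2
      have stepBr1 : RBNStep Rb Rr (Esum (fun _ _ => False) F, Sum.elim L M)
          ((fun x y => (x = Sum.inr u₀ ∧ y = Sum.inl v₀) ∨
              (x = Sum.inl v₀ ∧ y = Sum.inr u₀)), Sum.elim L M) := by
        refine Or.inr ⟨rfl, ?_, ?_⟩
        · rintro x (⟨h1, h2⟩ | ⟨h1, h2⟩) <;> (rw [h1] at h2; simp at h2)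
        · rintro x y (⟨h1, h2⟩ | ⟨h1, h2⟩)
          · exact Or.inr ⟨h2, h1⟩
          · exact Or.inl ⟨h2, h1⟩
      have hLLv : Function.update (Function.update (Sum.elim L M)
          (Sum.inl v₀ : Fin n ⊕ Fin m) t₂) (Sum.inr u₀) d (Sum.inl v₀) = t₂ := by
        rw [Function.update_of_ne (by simp), Function.update_self]
      have stepBr2 : RBNStep Rb Rr
          ((fun x y => (x = Sum.inr u₀ ∧ y = Sum.inl v₀) ∨
              (x = Sum.inl v₀ ∧ y = Sum.inr u₀)), Sum.elim L M)
          ((fun x y => (x = Sum.inr u₀ ∧ y = Sum.inl v₀) ∨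
              (x = Sum.inl v₀ ∧ y = Sum.inr u₀)),
           Function.update (Function.update (Sum.elim L M)
             (Sum.inl v₀) t₂) (Sum.inr u₀) d) := by
        refine Or.inl ⟨rfl, a, Sum.inr u₀, ?_, ?_, ?_⟩
        · simp only [Function.update_self, Sum.elim_inr]; exact hRbd
        · rintro w (⟨h1, h2⟩ | ⟨h1, h2⟩)
          · subst h2
            show Rr (Sum.elim L M (Sum.inl v₀)) a
              (Function.update (Function.update (Sum.elim L M)
                (Sum.inl v₀) t₂) (Sum.inr u₀) d (Sum.inl v₀))
            rw [hLLv]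
            exact hRrt
          · simp at h1
        · intro w hw hnw
          have hw2 : w ≠ Sum.inl v₀ := fun h => hnw (Or.inl ⟨rfl, h⟩)
          show Function.update (Function.update (Sum.elim L M)
            (Sum.inl v₀) t₂) (Sum.inr u₀) d w = Sum.elim L M w
          rw [Function.update_of_ne hw, Function.update_of_ne hw2]
      have runAll := (((runA.tail stepClear).trans runB).tail stepBr1).tail stepBr2
      have runFin := Relation.ReflTransGen.lift
        (fun pr : (Fin n ⊕ Fin m → Fin n ⊕ Fin m → Prop) × (Fin n ⊕ Fin m → S) =>
          ((fun x y => pr.1 (finSumFinEquiv.symm x) (finSumFinEquiv.symm y)),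
           (fun x => pr.2 (finSumFinEquiv.symm x))))
        (fun _ _ h => step_equiv finSumFinEquiv h) _ _ runAll
      refine ⟨n + m,
        (fun x y => Esum E₀ F₀ (finSumFinEquiv.symm x) (finSumFinEquiv.symm y)),
        (fun x => Sum.elim L₀ M₀ (finSumFinEquiv.symm x)),
        (fun x y => ((finSumFinEquiv.symm x = Sum.inr u₀ ∧ finSumFinEquiv.symm y = Sum.inl v₀) ∨
            (finSumFinEquiv.symm x = Sum.inl v₀ ∧ finSumFinEquiv.symm y = Sum.inr u₀))),
        (fun x => Function.update (Function.update (Sum.elim L M)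
          (Sum.inl v₀) t₂) (Sum.inr u₀) d (finSumFinEquiv.symm x)),
        ?_, ?_, ?_, runFin, finSumFinEquiv (Sum.inl v₀), ?_⟩
      · intro x
        show ¬ Esum E₀ F₀ (finSumFinEquiv.symm x) (finSumFinEquiv.symm x)
        rcases finSumFinEquiv.symm x with z | z
        · exact hI1 z
        · exact hJ1 z
      · intro x y
        show Esum E₀ F₀ (finSumFinEquiv.symm x) (finSumFinEquiv.symm y) →
          Esum E₀ F₀ (finSumFinEquiv.symm y) (finSumFinEquiv.symm x)
        rcases finSumFinEquiv.symm x with z | z <;>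
          rcases finSumFinEquiv.symm y with w | w
        · exact hI2 z w
        · exact fun h => False.elim h
        · exact fun h => False.elim h
        · exact hJ2 z w
      · intro x
        show Sum.elim L₀ M₀ (finSumFinEquiv.symm x) ∈ S₀
        rcases finSumFinEquiv.symm x with z | z
        · exact hI3 z
        · exact hJ3 z
      · show le t (Function.update (Function.update (Sum.elim L M)
          (Sum.inl v₀) t₂) (Sum.inr u₀) d
          (finSumFinEquiv.symm (finSumFinEquiv (Sum.inl v₀))))
        rw [Equiv.symm_apply_apply, hLLv]
        exact ht₂

/-- Soundness of the saturation algorithm (Lemma 1): any configuration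
reachable in some process `P'ᵢ` of the saturation sequence is coverable in the
reconfigurable broadcast network `RBN(P)`. -/
theorem saturation_sound {S A : Type*} (le : S → S → Prop)
    (Rb Rr : S → A → S → Prop) (S₀ : Set S)
    (hwqo : IsWqo le)
    (compatB : ∀ s₁ t₁ a s₂, le s₁ t₁ → Rb s₁ a s₂ →
        ∃ t₂, le s₂ t₂ ∧ Rb t₁ a t₂)
    (compatR : ∀ s₁ t₁ a s₂, le s₁ t₁ → Rr s₁ a s₂ →
        ∃ t₂, le s₂ t₂ ∧ Rr t₁ a t₂)
    (i : ℕ) (s : S)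
    (hreach : ReachT Rb Rr S₀ (Tseq Rb Rr S₀ le i) s) :
    RBNCoverable Rb Rr S₀ le s := by
  exact saturation_aux le Rb Rr S₀ hwqo.1 hwqo.2.1 compatB compatR i s hreach
end
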